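/- arXiv:1707.03214 — 8 statements merged into one kernel-verified Lean document; each statement's English description precedes it below -/
import Mathlib

section
/- Let C be a Z2Z4-additive code, i.e., an additive subgroup of Z2^α × Z4^β. The binary image Φ(C) under the extended Gray map is a linear subspace of Z2^{α+2β} if and only if for all u, v ∈ C, the vector 2(u*v) belongs to C. -/
open Polynomial

noncomputable section

abbrev Z2 := ZMod 2
abbrev Z4 := ZMod 4

/-- Coefficientwise reduction modulo 2. -/
def ρ : Z4 →+* Z2 := ZMod.castHom (show 2 ∣ 4 by norm_num) Z2

/-- The quotient ring `R[x]/(x^n - 1)`. -/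
abbrev QR (R : Type) [CommRing R] (n : ℕ) :=
  Polynomial R ⧸ Ideal.span {(Polynomial.X : Polynomial R) ^ n - 1}

def pmk {R : Type} [CommRing R] (n : ℕ) (p : Polynomial R) : QR R n :=
  Ideal.Quotient.mk _ p

/-- `Z4[x]`-module structure on `Z2[x]/(x^n-1)` via reduction mod 2;
this gives the action `p ⋆ (b | a) = (p̃ b | p a)` on the product. -/
instance (n : ℕ) : Module (Polynomial Z4) (QR Z2 n) :=
  Module.compHom _ ((Ideal.Quotient.mk _).comp (mapRingHom ρ) : Polynomial Z4 →+* QR Z2 n)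

def hat (u : Z4) : Z2 := ((u.val / 2 : ℕ) : Z2)

def til (u : Z4) : Z2 := ((u.val : ℕ) : Z2)

/-- The Gray map `φ(u') = (û' | ũ' + û')`, with the second block of coordinates
indexed by the right summand. -/
def gray {ι : Type} (u : ι → Z4) : (ι ⊕ ι) → Z2 :=
  Sum.elim (fun i => hat (u i)) (fun i => til (u i) + hat (u i))

/-- The extended Gray map `Φ(u | u') = (u | φ(u'))`. -/
def extGray {ι κ : Type} (v : (ι → Z2) × (κ → Z4)) : (ι → Z2) × ((κ ⊕ κ) → Z2) :=
  (v.1, gray v.2)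

/-- Identification of `Z2^n` with `Z2[x]/(x^n-1)`. -/
def toQ2 {n : ℕ} (u : Fin n → Z2) : QR Z2 n :=
  pmk n (∑ i, Polynomial.C (u i) * Polynomial.X ^ (i : ℕ))

/-- Identification of `Z4^n` with `Z4[x]/(x^n-1)`. -/
def toQ4 {n : ℕ} (u : Fin n → Z4) : QR Z4 n :=
  pmk n (∑ i, Polynomial.C (u i) * Polynomial.X ^ (i : ℕ))

/-- The standard polynomial identification of `Z2^α × Z4^β` with `R_{α,β}`. -/
def ident {α β : ℕ} (v : (Fin α → Z2) × (Fin β → Z4)) : QR Z2 α × QR Z4 β :=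
  (toQ2 v.1, toQ4 v.2)

/-- Right cyclic shift: `(u_0,…,u_{n-1}) ↦ (u_{n-1},u_0,…,u_{n-2})`. -/
def shiftR {n : ℕ} {R : Type} (u : Fin n → R) : Fin n → R :=
  fun i => u ((finRotate n).symm i)

/-- Simultaneous cyclic shift on both blocks of `Z2^α × Z4^β`. -/
def bshift {α β : ℕ} (v : (Fin α → Z2) × (Fin β → Z4)) : (Fin α → Z2) × (Fin β → Z4) :=
  (shiftR v.1, shiftR v.2)

/-- `IsTensorSquare n p q` says that `q = (p ⊗ p)`: `q` is the (monic) divisor of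
`x^n - 1` in `Z2[x]` whose roots (in the splitting field of `x^n-1`) are exactly the
products of pairs of roots of `p`. -/
def IsTensorSquare (n : ℕ) (p q : Polynomial Z2) : Prop :=
  q ∣ (Polynomial.X ^ n - 1) ∧ q.Monic ∧
    ∀ z : ((Polynomial.X : Polynomial Z2) ^ n - 1).SplittingField,
      Polynomial.aeval z q = 0 ↔
        ∃ z₁ z₂, Polynomial.aeval z₁ p = 0 ∧ Polynomial.aeval z₂ p = 0 ∧ z = z₁ * z₂

/-- The Nechaev permutation on `Z2^{2n}` (coordinates indexed by `Fin n ⊕ Fin n`,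
with `inr i` standing for position `n + i`): it swaps positions `2i+1` and `n + 2i+1`. -/
def nechaev {n : ℕ} (v : (Fin n ⊕ Fin n) → Z2) : (Fin n ⊕ Fin n) → Z2 :=
  Sum.elim (fun i => if Odd (i : ℕ) then v (Sum.inr i) else v (Sum.inl i))
    (fun i => if Odd (i : ℕ) then v (Sum.inl i) else v (Sum.inr i))

/-- The extended Nechaev–Gray map `Ψ(u | u') = (u | σ(φ(u')))`. -/
def nechaevGrayExt {α β : ℕ} (v : (Fin α → Z2) × (Fin β → Z4)) :
    (Fin α → Z2) × ((Fin β ⊕ Fin β) → Z2) :=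
  (v.1, nechaev (gray v.2))

/-- Identification of `Z2^{2n}` (indexed by `Fin n ⊕ Fin n`) with `Z2[x]/(x^{2n}-1)`. -/
def toQ2D {n : ℕ} (w : (Fin n ⊕ Fin n) → Z2) : QR Z2 (2 * n) :=
  pmk (2 * n) (∑ i : Fin n,
    (Polynomial.C (w (Sum.inl i)) * Polynomial.X ^ (i : ℕ) +
      Polynomial.C (w (Sum.inr i)) * Polynomial.X ^ (n + (i : ℕ))))

/-- Identification of `Z2^α × Z2^{2β}` with `Z2[x]/(x^α-1) × Z2[x]/(x^{2β}-1)`. -/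
def pairD {α β : ℕ} (v : (Fin α → Z2) × ((Fin β ⊕ Fin β) → Z2)) :
    QR Z2 α × QR Z2 (2 * β) :=
  (toQ2 v.1, toQ2D v.2)

def leeWt (u : Z4) : ℕ := min u.val (4 - u.val)

def leeDist {n : ℕ} (u v : Fin n → Z4) : ℕ := ∑ i, leeWt (u i - v i)

lemma hat_key : ∀ a b : Z4, hat a + hat b = hat (a + b + (a * b + a * b)) := by decide

lemma gray_snd_key : ∀ a b : Z4,
    (til a + hat a) + (til b + hat b) = til (a + b + (a * b + a * b)) + hat (a + b + (a * b + a * b)) := by decide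

lemma z4_ext : ∀ a b : Z4, hat a = hat b → til a + hat a = til b + hat b → a = b := by decide

lemma z2_add_self : ∀ a : Z2, a + a = 0 := by decide

lemma two_smul_mul {α β : ℕ} (u v : (Fin α → Z2) × (Fin β → Z4)) :
    2 • (u * v) = (0, fun i => u.2 i * v.2 i + u.2 i * v.2 i) := by
  refine Prod.ext ?_ ?_
  · funext i
    show 2 • (u.1 i * v.1 i) = 0
    rw [two_nsmul]
    exact z2_add_self _
  · funext i
    show 2 • (u.2 i * v.2 i) = _
    rw [two_nsmul]

lemma extGray_key {α β : ℕ} (u v : (Fin α → Z2) × (Fin β → Z4)) :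
    extGray u + extGray v = extGray (u + v + 2 • (u * v)) := by
  rw [two_smul_mul]
  refine Prod.ext ?_ ?_
  · funext i
    show u.1 i + v.1 i = u.1 i + v.1 i + 0
    rw [add_zero]
  · funext j
    cases j with
    | inl i => exact hat_key (u.2 i) (v.2 i)
    | inr i => exact gray_snd_key (u.2 i) (v.2 i)

lemma extGray_zero {α β : ℕ} : extGray (0 : (Fin α → Z2) × (Fin β → Z4)) = 0 := by
  refine Prod.ext rfl ?_
  funext j
  cases j with
  | inl i => show hat 0 = 0; decide
  | inr i => show til 0 + hat 0 = 0; decide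

lemma extGray_inj {α β : ℕ} :
    Function.Injective (extGray (ι := Fin α) (κ := Fin β)) := by
  intro u v h
  have h1 := congrArg Prod.fst h
  have h2 := congrArg Prod.snd h
  refine Prod.ext h1 ?_
  funext i
  exact z4_ext _ _ (congrFun h2 (Sum.inl i)) (congrFun h2 (Sum.inr i))

/-- For a `Z2Z4`-additive code `C` (an additive subgroup of `Z2^α × Z4^β`),
the image `Φ(C)` is a linear subspace of `Z2^{α+2β}` iff `2(u*v) ∈ C` for all `u, v ∈ C`. -/
theorem extGray_image_linear_iff (α β : ℕ)
    (C : AddSubgroup ((Fin α → Z2) × (Fin β → Z4))) :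
    (∃ S : Submodule Z2 ((Fin α → Z2) × ((Fin β ⊕ Fin β) → Z2)),
        (S : Set _) = extGray (ι := Fin α) (κ := Fin β) '' (C : Set _)) ↔
      ∀ u ∈ C, ∀ v ∈ C, 2 • (u * v) ∈ C := by
  constructor
  · rintro ⟨S, hS⟩ u hu v hv
    have hu' : extGray u ∈ (S : Set _) := by
      rw [hS]; exact Set.mem_image_of_mem _ hu
    have hv' : extGray v ∈ (S : Set _) := by
      rw [hS]; exact Set.mem_image_of_mem _ hv
    have hmem : extGray u + extGray v ∈ (S : Set _) := S.add_mem hu' hv'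
    rw [hS] at hmem
    obtain ⟨w, hw, hweq⟩ := hmem
    rw [extGray_key] at hweq
    have := extGray_inj hweq
    have h2 : 2 • (u * v) = w - (u + v) := by rw [this]; abel
    rw [h2]
    exact C.sub_mem hw (C.add_mem hu hv)
  · intro h
    refine ⟨⟨⟨⟨extGray '' (C : Set _), ?_⟩, ?_⟩, ?_⟩, rfl⟩
    · rintro a b ⟨u, hu, rfl⟩ ⟨v, hv, rfl⟩
      exact ⟨u + v + 2 • (u * v), C.add_mem (C.add_mem hu hv) (h u hu v hv),
        (extGray_key u v).symm⟩
    · exact ⟨0, C.zero_mem, extGray_zero⟩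
    · rintro c a ⟨u, hu, rfl⟩
      rcases (show ∀ d : Z2, d = 0 ∨ d = 1 by decide) c with rfl | rfl
      · exact ⟨0, C.zero_mem, by rw [extGray_zero, zero_smul]⟩
      · exact ⟨u, hu, by rw [one_smul]⟩
end
end

section
/- Let C be a Z2Z4-additive code in Z2^α × Z4^β such that Φ(C) is linear. Then C_Y, the projection of C onto the last β (quaternary) coordinates, is a Z4-linear code such that φ(C_Y) is a linear binary code. -/
open Polynomial

noncomputable section

/-- If `C` is a `Z2Z4`-additive code with `Φ(C)` linear, then the
projection `C_Y` onto the quaternary coordinates is a `Z4`-linear code whose Gray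
image `φ(C_Y)` is a linear binary code. -/
theorem proj_Y_linear_of_extGray_linear (α β : ℕ)
    (C : AddSubgroup ((Fin α → Z2) × (Fin β → Z4)))
    (hlin : ∃ S : Submodule Z2 ((Fin α → Z2) × ((Fin β ⊕ Fin β) → Z2)),
        (S : Set _) = extGray (ι := Fin α) (κ := Fin β) '' (C : Set _)) :
    (∃ D : Submodule Z4 (Fin β → Z4),
        (D : Set _) = Prod.snd '' (C : Set ((Fin α → Z2) × (Fin β → Z4)))) ∧
      (∃ T : Submodule Z2 ((Fin β ⊕ Fin β) → Z2),
        (T : Set _) = gray (ι := Fin β) ''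
          (Prod.snd '' (C : Set ((Fin α → Z2) × (Fin β → Z4))))) := by
  obtain ⟨S, hS⟩ := hlin
  constructor
  · exact ⟨AddSubgroup.toZModSubmodule 4
      (C.map (AddMonoidHom.snd (Fin α → Z2) (Fin β → Z4))), by
      simp [AddSubgroup.coe_map]⟩
  · refine ⟨S.map (LinearMap.snd Z2 (Fin α → Z2) ((Fin β ⊕ Fin β) → Z2)), ?_⟩
    rw [Submodule.map_coe, hS, Set.image_image, Set.image_image]
    rfl
end
end

section
/- There exists a Z2Z4-additive code C ⊆ Z2^3 × Z4^3 such that φ(C_Y) is a linear binary code but Φ(C) is not linear. Specifically, the code generated (as a subgroup) by the rows (1,0,0|0,0,0), (0,1,0|0,0,0), (0,0,1|2,0,0), (0,0,0|1,1,0), (0,0,0|1,0,1) has this property. -/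
set_option maxRecDepth 40000


open Polynomial

noncomputable section

/-- The additive map `Z2 → Z4` sending `a` to `2a` (twice the lift). -/
def h2 : Z2 →+ Z4 where
  toFun a := 2 * a.val
  map_zero' := by decide
  map_add' := by decide

/-- The defining functional of the example code. -/
def fC : ((Fin 3 → Z2) × (Fin 3 → Z4)) →+ Z4 where
  toFun v := v.2 0 - v.2 1 - v.2 2 - h2 (v.1 2)
  map_zero' := by simp
  map_add' v w := by
    show (v.2 0 + w.2 0) - (v.2 1 + w.2 1) - (v.2 2 + w.2 2) - h2 (v.1 2 + w.1 2) = _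
    rw [map_add]
    ring

def gg1 : (Fin 3 → Z2) × (Fin 3 → Z4) := (![1,0,0], ![0,0,0])
def gg2 : (Fin 3 → Z2) × (Fin 3 → Z4) := (![0,1,0], ![0,0,0])
def gg3 : (Fin 3 → Z2) × (Fin 3 → Z4) := (![0,0,1], ![2,0,0])
def gg4 : (Fin 3 → Z2) × (Fin 3 → Z4) := (![0,0,0], ![1,1,0])
def gg5 : (Fin 3 → Z2) × (Fin 3 → Z4) := (![0,0,0], ![1,0,1])

lemma decomp : ∀ v : (Fin 3 → Z2) × (Fin 3 → Z4), fC v = 0 →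
    v = (v.1 0).val • gg1 + (v.1 1).val • gg2 + (v.1 2).val • gg3 +
          (v.2 1).val • gg4 + (v.2 2).val • gg5 := by decide

/-- Sum-of-coordinates functional on `Z2^6`. -/
def sumL : ((Fin 3 ⊕ Fin 3) → Z2) →ₗ[Z2] Z2 where
  toFun w := ∑ i, w i
  map_add' a b := by simp [Finset.sum_add_distrib]
  map_smul' c a := by simp [Finset.mul_sum, mul_add]

lemma forward : ∀ w : (Fin 3 ⊕ Fin 3) → Z2, (∑ i, w i) = 0 →
    ∃ v : (Fin 3 → Z2) × (Fin 3 → Z4), fC v = 0 ∧ gray v.2 = w := by decide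

lemma backward : ∀ v : (Fin 3 → Z2) × (Fin 3 → Z4), fC v = 0 →
    (∑ i, gray v.2 i) = 0 := by decide

lemma keyNE : ∀ v : (Fin 3 → Z2) × (Fin 3 → Z4), fC v = 0 →
    extGray v ≠ extGray gg4 + extGray gg5 := by decide

/-- There is a `Z2Z4`-additive code `C ⊆ Z2^3 × Z4^3` (the one generated by
the listed rows) such that `φ(C_Y)` is linear but `Φ(C)` is not linear. -/
theorem example_CY_linear_C_not_linear :
    ∃ C : AddSubgroup ((Fin 3 → Z2) × (Fin 3 → Z4)),
      C = AddSubgroup.closure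
          {((![1,0,0] : Fin 3 → Z2), (![0,0,0] : Fin 3 → Z4)),
           (![0,1,0], ![0,0,0]),
           (![0,0,1], ![2,0,0]),
           (![0,0,0], ![1,1,0]),
           (![0,0,0], ![1,0,1])} ∧
      (∃ T : Submodule Z2 ((Fin 3 ⊕ Fin 3) → Z2),
          (T : Set _) = gray (ι := Fin 3) ''
            (Prod.snd '' (C : Set ((Fin 3 → Z2) × (Fin 3 → Z4))))) ∧
      ¬ ∃ S : Submodule Z2 ((Fin 3 → Z2) × ((Fin 3 ⊕ Fin 3) → Z2)),
          (S : Set _) = extGray (ι := Fin 3) (κ := Fin 3) '' (C : Set _) := by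
  refine ⟨fC.ker, ?_, ?_, ?_⟩
  · show fC.ker = AddSubgroup.closure {gg1, gg2, gg3, gg4, gg5}
    apply le_antisymm
    · intro v hv
      rw [AddMonoidHom.mem_ker] at hv
      rw [decomp v hv]
      have m1 : gg1 ∈ AddSubgroup.closure {gg1, gg2, gg3, gg4, gg5} :=
        AddSubgroup.subset_closure (by simp)
      have m2 : gg2 ∈ AddSubgroup.closure {gg1, gg2, gg3, gg4, gg5} :=
        AddSubgroup.subset_closure (by simp)
      have m3 : gg3 ∈ AddSubgroup.closure {gg1, gg2, gg3, gg4, gg5} :=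
        AddSubgroup.subset_closure (by simp)
      have m4 : gg4 ∈ AddSubgroup.closure {gg1, gg2, gg3, gg4, gg5} :=
        AddSubgroup.subset_closure (by simp)
      have m5 : gg5 ∈ AddSubgroup.closure {gg1, gg2, gg3, gg4, gg5} :=
        AddSubgroup.subset_closure (by simp)
      exact AddSubgroup.add_mem _
        (AddSubgroup.add_mem _
          (AddSubgroup.add_mem _
            (AddSubgroup.add_mem _ (AddSubgroup.nsmul_mem _ m1 _)
              (AddSubgroup.nsmul_mem _ m2 _))
            (AddSubgroup.nsmul_mem _ m3 _))
          (AddSubgroup.nsmul_mem _ m4 _))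
        (AddSubgroup.nsmul_mem _ m5 _)
    · rw [AddSubgroup.closure_le]
      intro v hv
      simp only [Set.mem_insert_iff, Set.mem_singleton_iff] at hv
      rcases hv with h | h | h | h | h <;> subst h <;>
        · show _ ∈ fC.ker
          rw [AddMonoidHom.mem_ker]
          decide
  · refine ⟨LinearMap.ker sumL, ?_⟩
    ext w
    simp only [SetLike.mem_coe, LinearMap.mem_ker, Set.mem_image]
    constructor
    · intro hw
      obtain ⟨v, hv1, hv2⟩ := forward w hw
      exact ⟨v.2, ⟨v, hv1, rfl⟩, hv2⟩
    · rintro ⟨y, ⟨v, hvC, rfl⟩, rfl⟩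
      exact backward v hvC
  · rintro ⟨S, hS⟩
    have h4 : extGray gg4 ∈ (S : Set _) := by
      rw [hS]
      exact ⟨gg4, show fC gg4 = 0 by decide, rfl⟩
    have h5 : extGray gg5 ∈ (S : Set _) := by
      rw [hS]
      exact ⟨gg5, show fC gg5 = 0 by decide, rfl⟩
    have hsum : extGray gg4 + extGray gg5 ∈ (S : Set _) := S.add_mem h4 h5
    rw [hS] at hsum
    obtain ⟨v, hvC, hveq⟩ := hsum
    exact keyNE v hvC hveq
end
end

section
/- There exists a Z2Z4-additive code C ⊆ Z2^2 × Z4^3 such that both projections C_X and C_Y are cyclic codes but C itself is not cyclic. Specifically, the code generated by the rows (1,0|1,0,0), (0,1|0,1,0), (0,0|0,0,1) has cyclic projections but π(0,0|0,0,1) = (0,0|1,0,0) ∉ C. -/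
open Polynomial

noncomputable section

def Ccode : AddSubgroup ((Fin 2 → Z2) × (Fin 3 → Z4)) where
  carrier := {v | ρ (v.2 0) = v.1 0 ∧ ρ (v.2 1) = v.1 1}
  add_mem' := by rintro a b ⟨h1, h2⟩ ⟨h3, h4⟩; exact ⟨by simp [h1, h3], by simp [h2, h4]⟩
  zero_mem' := by simp
  neg_mem' := by rintro a ⟨h1, h2⟩; exact ⟨by simp [h1], by simp [h2]⟩

lemma mem_Ccode (v : (Fin 2 → Z2) × (Fin 3 → Z4)) :
    v ∈ Ccode ↔ ρ (v.2 0) = v.1 0 ∧ ρ (v.2 1) = v.1 1 := Iff.rfl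

lemma shiftR_surjective {n : ℕ} {R : Type} : Function.Surjective (shiftR (n := n) (R := R)) := by
  intro w
  exact ⟨w ∘ (finRotate n), by funext i; simp only [shiftR, Function.comp_apply, Equiv.apply_symm_apply]⟩

lemma rho_natCast (m : ℕ) : ρ ((m : Z4)) = (m : Z2) := by simp [ρ]

lemma closure_eq_Ccode :
    AddSubgroup.closure
          {((![1,0] : Fin 2 → Z2), (![1,0,0] : Fin 3 → Z4)),
           (![0,1], ![0,1,0]),
           (![0,0], ![0,0,1])} = Ccode := by
  apply le_antisymm
  · rw [AddSubgroup.closure_le]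
    rintro v (rfl | rfl | rfl) <;> constructor <;> decide
  · rintro v ⟨h1, h2⟩
    have hv : v = (v.2 0).val • ((![1,0] : Fin 2 → Z2), (![1,0,0] : Fin 3 → Z4))
        + (v.2 1).val • ((![0,1] : Fin 2 → Z2), (![0,1,0] : Fin 3 → Z4))
        + (v.2 2).val • ((![0,0] : Fin 2 → Z2), (![0,0,1] : Fin 3 → Z4)) := by
      ext i
      · fin_cases i <;>
          simp [← h1, ← h2, ρ, ← ZMod.natCast_val, Matrix.cons_val_zero, Matrix.cons_val_one]
      · fin_cases i <;> simp [ZMod.natCast_val]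
    rw [hv]
    refine add_mem (add_mem ?_ ?_) ?_ <;>
      exact AddSubgroup.nsmul_mem _ (AddSubgroup.subset_closure (by simp)) _

lemma fst_Ccode : Prod.fst '' (Ccode : Set ((Fin 2 → Z2) × (Fin 3 → Z4))) = Set.univ := by
  apply Set.eq_univ_of_forall
  intro x
  refine ⟨(x, ![((x 0).val : Z4), ((x 1).val : Z4), 0]), ?_, rfl⟩
  constructor <;> simp [rho_natCast, ZMod.natCast_val, ZMod.cast_id]

lemma snd_Ccode : Prod.snd '' (Ccode : Set ((Fin 2 → Z2) × (Fin 3 → Z4))) = Set.univ := by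
  apply Set.eq_univ_of_forall
  intro y
  exact ⟨(![ρ (y 0), ρ (y 1)], y), ⟨by simp, by simp⟩, rfl⟩

lemma shiftR_univ {n : ℕ} {R : Type} : shiftR '' (Set.univ : Set (Fin n → R)) = Set.univ := by
  rw [Set.image_univ]
  exact Set.range_eq_univ.mpr shiftR_surjective

/-- There is a `Z2Z4`-additive code `C ⊆ Z2^2 × Z4^3` whose projections
`C_X` and `C_Y` are both cyclic while `C` itself is not cyclic; concretely the code
generated by `(1,0|1,0,0), (0,1|0,1,0), (0,0|0,0,1)`, for which
`π(0,0|0,0,1) = (0,0|1,0,0) ∉ C`. -/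
theorem example_projections_cyclic_C_not_cyclic :
    ∃ C : AddSubgroup ((Fin 2 → Z2) × (Fin 3 → Z4)),
      C = AddSubgroup.closure
          {((![1,0] : Fin 2 → Z2), (![1,0,0] : Fin 3 → Z4)),
           (![0,1], ![0,1,0]),
           (![0,0], ![0,0,1])} ∧
      shiftR '' (Prod.fst '' (C : Set ((Fin 2 → Z2) × (Fin 3 → Z4)))) =
        Prod.fst '' (C : Set ((Fin 2 → Z2) × (Fin 3 → Z4))) ∧
      shiftR '' (Prod.snd '' (C : Set ((Fin 2 → Z2) × (Fin 3 → Z4)))) =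
        Prod.snd '' (C : Set ((Fin 2 → Z2) × (Fin 3 → Z4))) ∧
      (![0,0], ![0,0,1]) ∈ C ∧
      bshift ((![0,0] : Fin 2 → Z2), (![0,0,1] : Fin 3 → Z4)) = (![0,0], ![1,0,0]) ∧
      ((![0,0] : Fin 2 → Z2), (![1,0,0] : Fin 3 → Z4)) ∉ C ∧
      bshift '' (C : Set ((Fin 2 → Z2) × (Fin 3 → Z4))) ≠ (C : Set _) := by
  have hmem : ((![0,0] : Fin 2 → Z2), (![0,0,1] : Fin 3 → Z4)) ∈ Ccode := by
    constructor <;> decide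
  have hnmem : ((![0,0] : Fin 2 → Z2), (![1,0,0] : Fin 3 → Z4)) ∉ Ccode := by
    intro h
    exact absurd h.1 (by decide)
  have hbs : bshift ((![0,0] : Fin 2 → Z2), (![0,0,1] : Fin 3 → Z4)) = (![0,0], ![1,0,0]) := by
    refine Prod.ext ?_ ?_ <;> funext i <;> fin_cases i <;> simp [bshift, shiftR] <;> decide
  refine ⟨Ccode, closure_eq_Ccode.symm, ?_, ?_, hmem, hbs, hnmem, ?_⟩
  · rw [fst_Ccode, shiftR_univ]
  · rw [snd_Ccode, shiftR_univ]
  · intro heq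
    have : bshift ((![0,0] : Fin 2 → Z2), (![0,0,1] : Fin 3 → Z4)) ∈ (Ccode : Set _) := by
      rw [← heq]
      exact Set.mem_image_of_mem _ hmem
    rw [hbs] at this
    exact hnmem this
end
end

section
/- A subset C ⊆ Z2^α × Z4^β is a Z2Z4-additive cyclic code (an additive subgroup invariant under the simultaneous cyclic shift) if and only if its image under the standard polynomial identification is a Z4[x]-submodule of R_{α,β} = Z2[x]/(x^α−1) × Z4[x]/(x^β−1). -/
open Polynomial

noncomputable section

section Aux

variable {R : Type} [CommRing R]

lemma coeff_sumPoly {n : ℕ} (u : Fin n → R) (j : Fin n) :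
    (∑ i, C (u i) * X ^ (i : ℕ)).coeff (j : ℕ) = u j := by
  rw [Polynomial.finset_sum_coeff]
  simp only [Polynomial.coeff_C_mul, Polynomial.coeff_X_pow]
  rw [Finset.sum_eq_single j]
  · simp
  · intro i _ hij
    have : (j : ℕ) ≠ (i : ℕ) := fun h => hij (Fin.ext h.symm)
    simp [this]
  · simp

lemma sum_inj [Nontrivial R] {n : ℕ} {u v : Fin n → R}
    (h : pmk n (∑ i, C (u i) * X ^ (i : ℕ)) = pmk n (∑ i, C (v i) * X ^ (i : ℕ))) :
    u = v := by
  rcases n with _ | m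
  · exact Subsingleton.elim u v
  · set d : Polynomial R := ∑ i : Fin (m + 1), C (u i - v i) * X ^ (i : ℕ) with hd
    have hsum : (∑ i : Fin (m+1), C (u i) * X ^ (i : ℕ))
        - (∑ i : Fin (m+1), C (v i) * X ^ (i : ℕ)) = d := by
      rw [hd, ← Finset.sum_sub_distrib]
      exact Finset.sum_congr rfl fun i _ => by rw [map_sub, sub_mul]
    have hmem : d ∈ Ideal.span {(X : Polynomial R) ^ (m+1) - 1} := by
      rw [← hsum]; exact Ideal.Quotient.eq.mp h
    rw [Ideal.mem_span_singleton] at hmem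
    obtain ⟨r, hr⟩ := hmem
    have hdeg : d.degree < ((m + 1 : ℕ) : WithBot ℕ) := by
      rw [hd]
      apply lt_of_le_of_lt (Polynomial.degree_sum_le _ _)
      rw [Finset.sup_lt_iff (by exact WithBot.bot_lt_coe _)]
      intro i _
      refine lt_of_le_of_lt (Polynomial.degree_C_mul_X_pow_le _ _) ?_
      exact_mod_cast i.isLt
    have hr0 : r = 0 := by
      by_contra h0
      have hm : ((X : Polynomial R) ^ (m+1) - 1).Monic := by
        simpa using Polynomial.monic_X_pow_sub_C (1 : R) (Nat.succ_ne_zero m)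
      have hdm : ((X : Polynomial R) ^ (m+1) - 1).degree = ((m+1 : ℕ) : WithBot ℕ) := by
        simpa using Polynomial.degree_X_pow_sub_C (Nat.succ_pos m) (1 : R)
      have hr' : d = r * ((X : Polynomial R) ^ (m+1) - 1) := by rw [hr]; ring
      have := hm.degree_mul (p := r)
      rw [← hr', hdm, Polynomial.degree_eq_natDegree h0] at this
      rw [this, add_comm] at hdeg
      have : ((m+1 : ℕ) : WithBot ℕ) ≤ ((m+1 : ℕ) : WithBot ℕ) + (r.natDegree : WithBot ℕ) := by
        exact_mod_cast le_add_of_nonneg_right (by exact_mod_cast Nat.zero_le _)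
      exact absurd (lt_of_le_of_lt this hdeg) (lt_irrefl _)
    rw [hr0, mul_zero] at hr
    funext i
    have := coeff_sumPoly (fun i => u i - v i) i
    rw [show (∑ j : Fin (m+1), C ((fun i => u i - v i) j) * X ^ (j : ℕ)) = d from rfl, hr] at this
    simp only [Polynomial.coeff_zero] at this
    exact sub_eq_zero.mp this.symm

lemma pmk_shift {n : ℕ} (u : Fin n → R) :
    pmk n (∑ i, C (shiftR u i) * X ^ (i : ℕ)) =
      pmk n X * pmk n (∑ i, C (u i) * X ^ (i : ℕ)) := by
  rcases n with _ | m
  · simp [pmk]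
  · have h1 : (∑ i, C (shiftR u i) * X ^ (i : ℕ)) =
        ∑ j, C (u j) * X ^ ((finRotate (m+1) j : ℕ)) := by
      rw [← Equiv.sum_comp (finRotate (m+1)) (fun i => C (shiftR u i) * X ^ (i : ℕ))]
      exact Finset.sum_congr rfl fun j _ => by simp only [shiftR, Equiv.symm_apply_apply]
    rw [h1]
    show Ideal.Quotient.mk _ _ = Ideal.Quotient.mk _ _ * Ideal.Quotient.mk _ _
    rw [← map_mul, Finset.mul_sum, map_sum, map_sum]
    apply Finset.sum_congr rfl
    intro j _
    rw [Ideal.Quotient.eq, Ideal.mem_span_singleton]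
    by_cases hj : j = Fin.last m
    · subst hj
      have h0 : ((finRotate (m+1)) (Fin.last m) : ℕ) = 0 := by
        rw [finRotate_succ_apply, Fin.val_add_one]; simp
      refine ⟨-C (u (Fin.last m)), ?_⟩
      rw [h0, Fin.val_last]
      ring
    · have h0 : ((finRotate (m+1)) j : ℕ) = (j : ℕ) + 1 := by
        rw [finRotate_succ_apply, Fin.val_add_one]; simp [hj]
      rw [h0]
      refine ⟨0, by ring⟩

end Aux

lemma toQ2_add {n : ℕ} (u v : Fin n → Z2) : toQ2 (u + v) = toQ2 u + toQ2 v := by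
  unfold toQ2 pmk
  rw [← map_add, ← Finset.sum_add_distrib]
  congr 1
  exact Finset.sum_congr rfl fun i _ => by simp [add_mul]

lemma toQ4_add {n : ℕ} (u v : Fin n → Z4) : toQ4 (u + v) = toQ4 u + toQ4 v := by
  unfold toQ4 pmk
  rw [← map_add, ← Finset.sum_add_distrib]
  congr 1
  exact Finset.sum_congr rfl fun i _ => by simp [add_mul]

lemma ident_add {α β : ℕ} (v w : (Fin α → Z2) × (Fin β → Z4)) :
    ident (v + w) = ident v + ident w := by
  unfold ident
  exact Prod.ext (toQ2_add _ _) (toQ4_add _ _)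

def identHom (α β : ℕ) : ((Fin α → Z2) × (Fin β → Z4)) →+ (QR Z2 α × QR Z4 β) :=
  AddMonoidHom.mk' ident ident_add

instance : Nontrivial Z4 := ⟨0, 2, by decide⟩
instance : Nontrivial Z2 := ⟨0, 1, by decide⟩

lemma ident_inj {α β : ℕ} : Function.Injective (ident (α := α) (β := β)) := by
  intro v w h
  rw [Prod.ext_iff] at h
  exact Prod.ext (sum_inj h.1) (sum_inj h.2)

lemma ident_bshift {α β : ℕ} (v : (Fin α → Z2) × (Fin β → Z4)) :
    ident (bshift v) = (X : Polynomial Z4) • ident v := by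
  unfold ident bshift
  refine Prod.ext ?_ ?_
  · show toQ2 (shiftR v.1) = (X : Polynomial Z4) • toQ2 v.1
    have h : (X : Polynomial Z4) • toQ2 v.1 =
        pmk α (Polynomial.map ρ X * ∑ i, C (v.1 i) * X ^ (i : ℕ)) := rfl
    rw [h, Polynomial.map_X]
    show toQ2 (shiftR v.1) = Ideal.Quotient.mk _ _
    rw [map_mul]
    exact pmk_shift v.1
  · show toQ4 (shiftR v.2) = (X : Polynomial Z4) • toQ4 v.2
    have h : (X : Polynomial Z4) • toQ4 v.2 =
        pmk β ((X : Polynomial Z4) * ∑ i, C (v.2 i) * X ^ (i : ℕ)) := rfl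
    rw [h]
    show toQ4 (shiftR v.2) = Ideal.Quotient.mk _ _
    rw [map_mul]
    exact pmk_shift v.2

lemma Cconst_smul {α β : ℕ} (a : Z4) (z : QR Z2 α × QR Z4 β) :
    (C a : Polynomial Z4) • z = a.val • z := by
  have hC : (C a : Polynomial Z4) = ((a.val : ℕ) : Polynomial Z4) := by
    conv_lhs => rw [← ZMod.natCast_rightInverse a]
    rw [map_natCast]
  rw [hC, Nat.cast_smul_eq_nsmul]

open Fin.NatCast Fin.CommRing in
lemma finRotate_iterate {m : ℕ} (k : ℕ) (i : Fin (m+1)) :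
    (finRotate (m+1))^[k] i = i + (k : Fin (m+1)) := by
  induction k with
  | zero => simp
  | succ t ih => rw [Function.iterate_succ_apply', ih, finRotate_succ_apply]; push_cast; ring

lemma shiftR_iterate {R : Type} {n : ℕ} (k : ℕ) (u : Fin n → R) :
    shiftR^[k] u = fun i => u ((Equiv.symm (finRotate n))^[k] i) := by
  induction k with
  | zero => simp
  | succ t ih =>
    rw [Function.iterate_succ_apply', ih]
    funext i
    simp [shiftR, Function.iterate_succ_apply]

lemma shiftR_iterate_self {R : Type} {n : ℕ} (u : Fin n → R) : shiftR^[n] u = u := by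
  rcases n with _ | m
  · simp
  · rw [shiftR_iterate]
    funext i
    have hfix : ∀ j : Fin (m+1), (finRotate (m+1))^[m+1] j = j := by
      intro j
      rw [finRotate_iterate]
      simp
    have hLI : Function.LeftInverse (Equiv.symm (finRotate (m+1))) (finRotate (m+1)) :=
      (finRotate (m+1)).symm_apply_apply
    have := (hLI.iterate (m+1)) i
    rw [hfix i] at this
    rw [this]

lemma shiftR_iterate_mul {R : Type} {n : ℕ} (t : ℕ) (u : Fin n → R) :
    shiftR^[n * t] u = u := by
  rw [Function.iterate_mul]
  exact Function.iterate_fixed (shiftR_iterate_self u) t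

lemma bshift_iterate {α β : ℕ} (k : ℕ) (v : (Fin α → Z2) × (Fin β → Z4)) :
    bshift^[k] v = (shiftR^[k] v.1, shiftR^[k] v.2) := by
  induction k with
  | zero => simp
  | succ t ih =>
    rw [Function.iterate_succ_apply', ih]
    show (shiftR (shiftR^[t] v.1), shiftR (shiftR^[t] v.2)) = _
    rw [← Function.iterate_succ_apply' shiftR, ← Function.iterate_succ_apply' shiftR]

lemma bshift_iterate_N {α β : ℕ} (v : (Fin α → Z2) × (Fin β → Z4)) :
    bshift^[(max α 1) * (max β 1)] v = v := by
  rw [bshift_iterate]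
  have h1 : shiftR^[(max α 1) * (max β 1)] v.1 = v.1 := by
    rcases Nat.eq_zero_or_pos α with h | h
    · subst h; exact Subsingleton.elim _ _
    · rw [show max α 1 = α from max_eq_left h]
      exact shiftR_iterate_mul _ _
  have h2 : shiftR^[(max α 1) * (max β 1)] v.2 = v.2 := by
    rcases Nat.eq_zero_or_pos β with h | h
    · subst h; exact Subsingleton.elim _ _
    · rw [show max β 1 = β from max_eq_left h, mul_comm]
      exact shiftR_iterate_mul _ _
  rw [h1, h2]

lemma ident_bshift_iterate {α β : ℕ} (k : ℕ) (v : (Fin α → Z2) × (Fin β → Z4)) :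
    ident (bshift^[k] v) = ((X : Polynomial Z4) ^ k) • ident v := by
  induction k with
  | zero => simp
  | succ t ih =>
    rw [Function.iterate_succ_apply', ident_bshift, ih, ← mul_smul, ← pow_succ']

/-- A subset `C ⊆ Z2^α × Z4^β` is a `Z2Z4`-additive cyclic code
(an additive subgroup invariant under the simultaneous cyclic shift) if and only if its
image under the standard polynomial identification is a `Z4[x]`-submodule of
`R_{α,β} = Z2[x]/(x^α-1) × Z4[x]/(x^β-1)`. -/
theorem cyclic_iff_submodule (α β : ℕ) (C : Set ((Fin α → Z2) × (Fin β → Z4))) :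
    ((∃ G : AddSubgroup ((Fin α → Z2) × (Fin β → Z4)), (G : Set _) = C) ∧
        bshift '' C = C) ↔
      ∃ S : Submodule (Polynomial Z4) (QR Z2 α × QR Z4 β),
        (S : Set _) = ident '' C := by
  constructor
  · rintro ⟨⟨G, rfl⟩, hsh⟩
    set H := AddSubgroup.map (identHom α β) G with hH
    have himg : (H : Set (QR Z2 α × QR Z4 β)) = ident '' (G : Set ((Fin α → Z2) × (Fin β → Z4))) := by rw [hH, AddSubgroup.coe_map]; rfl
    have hX : ∀ z ∈ H, (X : Polynomial Z4) • z ∈ H := by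
      intro z hz
      obtain ⟨v, hv, rfl⟩ := AddSubgroup.mem_map.mp hz
      have hbv : bshift v ∈ G := by
        have : bshift v ∈ bshift '' (G : Set _) := Set.mem_image_of_mem _ hv
        rwa [hsh] at this
      have : (X : Polynomial Z4) • (identHom α β) v = (identHom α β) (bshift v) :=
        (ident_bshift v).symm
      rw [this]
      exact AddSubgroup.mem_map.mpr ⟨bshift v, hbv, rfl⟩
    have hXp : ∀ (k : ℕ), ∀ z ∈ H, ((X : Polynomial Z4) ^ k) • z ∈ H := by
      intro k
      induction k with
      | zero => intro z hz; simpa using hz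
      | succ m ih =>
        intro z hz
        rw [pow_succ, mul_smul]
        exact ih _ (hX z hz)
    have hsmul : ∀ (p : Polynomial Z4), ∀ z ∈ H, p • z ∈ H := by
      intro p z hz
      induction p using Polynomial.induction_on' with
      | add p q hp hq => rw [add_smul]; exact H.add_mem hp hq
      | monomial k a =>
        rw [← Polynomial.C_mul_X_pow_eq_monomial, mul_smul, Cconst_smul]
        exact AddSubgroup.nsmul_mem H (hXp k z hz) _
    refine ⟨{ carrier := (H : Set _),
              add_mem' := fun h1 h2 => H.add_mem h1 h2,
              zero_mem' := H.zero_mem,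
              smul_mem' := fun p z hz => hsmul p z hz }, himg⟩
  · rintro ⟨S, hS⟩
    have hC : C = ident ⁻¹' (S : Set _) := by
      rw [hS, Set.preimage_image_eq _ ident_inj]
    constructor
    · refine ⟨AddSubgroup.comap (identHom α β) S.toAddSubgroup, ?_⟩
      rw [AddSubgroup.coe_comap, Submodule.coe_toAddSubgroup]
      show ident ⁻¹' (S : Set _) = C
      exact hC.symm
    · apply Set.Subset.antisymm
      · rintro _ ⟨v, hv, rfl⟩
        rw [hC] at hv ⊢
        show ident (bshift v) ∈ (S : Set _)
        rw [ident_bshift]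
        exact S.smul_mem _ hv
      · intro v hv
        set N := (max α 1) * (max β 1) with hN
        have hN1 : 1 ≤ N := Nat.one_le_iff_ne_zero.mpr (by positivity)
        refine ⟨bshift^[N - 1] v, ?_, ?_⟩
        · rw [hC]
          show ident (bshift^[N-1] v) ∈ (S : Set _)
          rw [ident_bshift_iterate]
          exact S.smul_mem _ (by rw [hC] at hv; exact hv)
        · rw [← Function.iterate_succ_apply' bshift, Nat.succ_eq_add_one,
            Nat.sub_add_cancel hN1]
          exact bshift_iterate_N v
end
end

section
/- Let C be a Z2Z4-additive code with generator matrix in the standard block form (rows of order two followed by δ rows of order four), and let C' be the subcode generated by the rows of order two with zero identity blocks together with the δ order-four rows (i.e., the last two blocks of rows). Then Φ(C) is linear if and only if Φ(C') is linear. -/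
open Polynomial

noncomputable section

namespace StarAux

variable {ι κ : Type}

/-- The "star" correction `(u,v) ↦ (0 | 2 (u₂ * v₂))`. -/
def starc (u v : (ι → Z2) × (κ → Z4)) : (ι → Z2) × (κ → Z4) := (0, 2 * (u.2 * v.2))

lemma hat_add : ∀ u v : Z4, hat (u + v) = hat u + hat v + hat (2 * (u * v)) := by decide

lemma gsnd_add : ∀ u v : Z4, til (u + v) + hat (u + v)
    = (til u + hat u) + (til v + hat v) + (til (2*(u*v)) + hat (2*(u*v))) := by decide

lemma gray_add (u v : κ → Z4) :
    gray (u + v) = gray u + gray v + gray (2 * (u * v)) := by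
  funext i
  cases i with
  | inl i => exact hat_add (u i) (v i)
  | inr i => exact gsnd_add (u i) (v i)

lemma gray_zero : gray (0 : κ → Z4) = 0 := by
  funext i; cases i <;> simp [gray, hat, til]

lemma extGray_zero : extGray (0 : (ι → Z2) × (κ → Z4)) = 0 := by
  simp only [extGray, Prod.fst_zero, Prod.snd_zero, gray_zero]; rfl

lemma extGray_add (u v : (ι → Z2) × (κ → Z4)) :
    extGray (u + v) = extGray u + extGray v + extGray (starc u v) := by
  have h1 : (u + v).1 = u.1 + v.1 + (starc u v).1 := by
    simp [starc]
  have h2 : gray ((u + v).2) = gray u.2 + gray v.2 + gray ((starc u v).2) :=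
    gray_add u.2 v.2
  exact Prod.ext h1 h2

lemma starc_starc (w u v : (ι → Z2) × (κ → Z4)) : starc w (starc u v) = 0 := by
  have key : ∀ a b : Z4, 2 * (a * (2 * b)) = 0 := by decide
  refine Prod.ext rfl ?_
  funext j
  simpa [starc] using key (w.2 j) ((u.2 * v.2) j)

lemma y_add_self (y : (ι → Z2) × ((κ ⊕ κ) → Z2)) : y + y = 0 := by
  have h : ∀ z : Z2, z + z = 0 := by decide
  refine Prod.ext ?_ ?_ <;> funext i <;> simp [h]

lemma extGray_add_starc (u v : (ι → Z2) × (κ → Z4)) :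
    extGray (u + v + starc u v) = extGray u + extGray v := by
  rw [extGray_add (u + v) (starc u v), starc_starc, extGray_zero, add_zero,
    extGray_add u v, add_assoc, y_add_self, add_zero]

lemma extGray_injective : Function.Injective (extGray (ι := ι) (κ := κ)) := by
  intro u v h
  have h1 := congrArg Prod.fst h
  have h2 := congrArg Prod.snd h
  have key : ∀ a b : Z4, hat a = hat b → til a + hat a = til b + hat b → a = b := by decide
  have h3 : u.2 = v.2 := funext fun i =>
    key _ _ (congrFun h2 (Sum.inl i)) (congrFun h2 (Sum.inr i))
  exact Prod.ext h1 h3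

lemma starc_add_left (u w v : (ι → Z2) × (κ → Z4)) :
    starc (u + w) v = starc u v + starc w v := by
  have : 2 * ((u.2 + w.2) * v.2) = 2 * (u.2 * v.2) + 2 * (w.2 * v.2) := by ring
  simp [starc, this, Prod.mk_add_mk]

lemma starc_add_right (u w v : (ι → Z2) × (κ → Z4)) :
    starc v (u + w) = starc v u + starc v w := by
  have : 2 * (v.2 * (u.2 + w.2)) = 2 * (v.2 * u.2) + 2 * (v.2 * w.2) := by ring
  simp [starc, this, Prod.mk_add_mk]

lemma starc_neg_left (u v : (ι → Z2) × (κ → Z4)) : starc (-u) v = - starc u v := by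
  have : 2 * ((-u.2) * v.2) = -(2 * (u.2 * v.2)) := by ring
  simp [starc, this, Prod.neg_mk]

lemma starc_neg_right (u v : (ι → Z2) × (κ → Z4)) : starc v (-u) = - starc v u := by
  have : 2 * (v.2 * (-u.2)) = -(2 * (v.2 * u.2)) := by ring
  simp [starc, this, Prod.neg_mk]

lemma starc_zero_left (v : (ι → Z2) × (κ → Z4)) : starc 0 v = 0 := by
  simp [starc]

lemma starc_zero_right (v : (ι → Z2) × (κ → Z4)) : starc v 0 = 0 := by
  simp [starc]

lemma starc_eq_zero_left {u : (ι → Z2) × (κ → Z4)} (v : (ι → Z2) × (κ → Z4))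
    (h : 2 * u.2 = 0) : starc u v = 0 := by
  have : 2 * (u.2 * v.2) = (2 * u.2) * v.2 := by ring
  simp [starc, this, h]

lemma starc_eq_zero_right {u : (ι → Z2) × (κ → Z4)} (v : (ι → Z2) × (κ → Z4))
    (h : 2 * u.2 = 0) : starc v u = 0 := by
  have : 2 * (v.2 * u.2) = (2 * u.2) * v.2 := by ring
  simp [starc, this, h]

/-- The linearity criterion: `Φ(D)` is linear iff `D` is closed under the star correction. -/
lemma linear_iff_starc (D : AddSubgroup ((ι → Z2) × (κ → Z4))) :
    (∃ S : Submodule Z2 ((ι → Z2) × ((κ ⊕ κ) → Z2)),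
        (S : Set _) = extGray (ι := ι) (κ := κ) '' (D : Set _)) ↔
      ∀ u ∈ D, ∀ v ∈ D, starc u v ∈ D := by
  constructor
  · rintro ⟨S, hS⟩ u hu v hv
    have h1 : extGray u ∈ (S : Set _) := by rw [hS]; exact ⟨u, hu, rfl⟩
    have h2 : extGray v ∈ (S : Set _) := by rw [hS]; exact ⟨v, hv, rfl⟩
    have h3 : extGray u + extGray v ∈ (S : Set _) := S.add_mem h1 h2
    rw [hS] at h3
    obtain ⟨w, hw, hwe⟩ := h3
    rw [← extGray_add_starc] at hwe
    have hw' : w = u + v + starc u v := extGray_injective hwe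
    have : starc u v = w - u - v := by rw [hw']; abel
    rw [this]
    exact sub_mem (sub_mem hw hu) hv
  · intro h
    refine ⟨{ carrier := extGray (ι := ι) (κ := κ) '' (D : Set _),
              add_mem' := ?_, zero_mem' := ?_, smul_mem' := ?_ }, rfl⟩
    · rintro a b ⟨u, hu, rfl⟩ ⟨v, hv, rfl⟩
      exact ⟨u + v + starc u v, D.add_mem (D.add_mem hu hv) (h u hu v hv),
        extGray_add_starc u v⟩
    · exact ⟨0, D.zero_mem, extGray_zero⟩
    · intro c x hx
      have hc : c = 0 ∨ c = 1 := by revert c; decide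
      rcases hc with rfl | rfl
      · rw [zero_smul]; exact ⟨0, D.zero_mem, extGray_zero⟩
      · rw [one_smul]; exact hx

/-- Closure under the star correction follows from closure on generators. -/
lemma starc_mem_closure {G : Set ((ι → Z2) × (κ → Z4))}
    (h : ∀ g ∈ G, ∀ g' ∈ G, starc g g' ∈ AddSubgroup.closure G) :
    ∀ u ∈ AddSubgroup.closure G, ∀ v ∈ AddSubgroup.closure G,
      starc u v ∈ AddSubgroup.closure G := by
  intro u hu
  induction hu using AddSubgroup.closure_induction with
  | mem g hg =>
    intro v hv
    induction hv using AddSubgroup.closure_induction with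
    | mem g' hg' => exact h g hg g' hg'
    | zero => rw [starc_zero_right]; exact AddSubgroup.zero_mem _
    | add x y hx hy ihx ihy => rw [starc_add_right]; exact AddSubgroup.add_mem _ ihx ihy
    | neg x hx ihx => rw [starc_neg_right]; exact AddSubgroup.neg_mem _ ihx
  | zero => intro v hv; rw [starc_zero_left]; exact AddSubgroup.zero_mem _
  | add x y hx hy ihx ihy =>
    intro v hv
    rw [starc_add_left]; exact AddSubgroup.add_mem _ (ihx v hv) (ihy v hv)
  | neg x hx ihx =>
    intro v hv
    rw [starc_neg_left]; exact AddSubgroup.neg_mem _ (ihx v hv)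

lemma add_self_of {ι κ : Type} (v : (ι → Z2) × (κ → Z4)) (h : 2 * v.2 = 0) :
    v + v = 0 := by
  refine Prod.ext ?_ ?_
  · funext i; exact (by decide : ∀ z : Z2, z + z = 0) _
  · show v.2 + v.2 = 0; rw [← two_mul]; exact h

lemma val_add_smul {M : Type} [AddCommMonoid M] (r : M) (h : r + r = 0) (c d : Z2) :
    (c + d).val • r = c.val • r + d.val • r := by
  have h0 : ∀ z : Z2, z = 0 ∨ z = 1 := by decide
  rcases h0 c with rfl | rfl <;> rcases h0 d with rfl | rfl <;>
    simp [show ((0:Z2)+0).val = 0 from rfl, show ((0:Z2)+1).val = 1 from rfl,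
      show ((1:Z2)+0).val = 1 from rfl, show ((1:Z2)+1).val = 0 from rfl,
      show ((0:Z2)).val = 0 from rfl, show ((1:Z2)).val = 1 from rfl, h]

lemma retract_fix {n₁ n₂ : ℕ} {M : Type} [AddCommMonoid M]
    (r₁ : Fin n₁ → M) (r₂ : Fin n₂ → M) (T : Fin n₁ → Fin n₂ → Z2)
    (h1 : ∀ i, r₁ i + r₁ i = 0) (h2 : ∀ j, r₂ j + r₂ j = 0) :
    ∃ hmf : ((Fin n₁ → Z2) × (Fin n₂ → Z2)) → M,
      (∀ p q, hmf (p + q) = hmf p + hmf q) ∧ hmf 0 = 0 ∧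
      (∀ i, hmf (fun k => if k = i then 1 else 0, fun j => T i j) = r₁ i) ∧
      (∀ i, hmf (fun _ => 0, fun j => if j = i then 1 else 0) = r₂ i) := by
  classical
  have hz2self : ∀ z : Z2, z + z = 0 := by decide
  refine ⟨fun ab => (∑ i, (ab.1 i).val • r₁ i) +
      (∑ j, (ab.2 j + ∑ i, ab.1 i * T i j).val • r₂ j), ?_, ?_, ?_, ?_⟩
  · intro p q
    show (∑ i, ((p.1 + q.1) i).val • r₁ i) +
        (∑ j, ((p.2 + q.2) j + ∑ i, (p.1 + q.1) i * T i j).val • r₂ j) = _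
    have e1 : (∑ i, ((p.1 + q.1) i).val • r₁ i)
        = (∑ i, (p.1 i).val • r₁ i) + ∑ i, (q.1 i).val • r₁ i := by
      rw [← Finset.sum_add_distrib]
      exact Finset.sum_congr rfl fun i _ => val_add_smul _ (h1 i) _ _
    have e2 : (∑ j, ((p.2 + q.2) j + ∑ i, (p.1 + q.1) i * T i j).val • r₂ j)
        = (∑ j, (p.2 j + ∑ i, p.1 i * T i j).val • r₂ j)
          + ∑ j, (q.2 j + ∑ i, q.1 i * T i j).val • r₂ j := by
      rw [← Finset.sum_add_distrib]
      refine Finset.sum_congr rfl fun j _ => ?_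
      have hco : (p.2 + q.2) j + ∑ i, (p.1 + q.1) i * T i j
          = (p.2 j + ∑ i, p.1 i * T i j) + (q.2 j + ∑ i, q.1 i * T i j) := by
        simp only [Pi.add_apply, add_mul, Finset.sum_add_distrib]
        abel
      rw [hco]
      exact val_add_smul _ (h2 j) _ _
    rw [e1, e2]
    exact add_add_add_comm _ _ _ _
  · show (∑ i : Fin n₁, ((0:Z2)).val • r₁ i) +
        (∑ j : Fin n₂, (((0:Z2) + ∑ i, (0:Z2) * T i j)).val • r₂ j) = 0
    have e1 : (∑ i : Fin n₁, ((0:Z2)).val • r₁ i) = 0 :=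
      Finset.sum_eq_zero fun k _ => by rw [show ((0:Z2)).val = 0 from rfl, zero_smul]
    have e2 : (∑ j : Fin n₂, (((0:Z2) + ∑ i, (0:Z2) * T i j)).val • r₂ j) = 0 := by
      refine Finset.sum_eq_zero fun j _ => ?_
      have hin : ((0:Z2) + ∑ i, (0:Z2) * T i j) = 0 := by simp
      rw [hin, show ((0:Z2)).val = 0 from rfl, zero_smul]
    rw [e1, e2, add_zero]
  · intro i
    show (∑ k, ((if k = i then (1:Z2) else 0)).val • r₁ k) +
        (∑ j, ((T i j + ∑ k, (if k = i then (1:Z2) else 0) * T k j)).val • r₂ j) = r₁ i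
    have e1 : (∑ k, ((if k = i then (1:Z2) else 0)).val • r₁ k) = r₁ i := by
      rw [Finset.sum_congr rfl (fun k _ => show ((if k = i then (1:Z2) else 0)).val • r₁ k
          = if k = i then r₁ k else 0 by
            split_ifs <;>
              simp [show ((1:Z2)).val = 1 from rfl, show ((0:Z2)).val = 0 from rfl])]
      simp
    have e2 : (∑ j, ((T i j + ∑ k, (if k = i then (1:Z2) else 0) * T k j)).val • r₂ j)
        = 0 := by
      refine Finset.sum_eq_zero fun j _ => ?_
      have hin : (∑ k, (if k = i then (1:Z2) else 0) * T k j) = T i j := by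
        simp [ite_mul]
      rw [hin, hz2self, show ((0:Z2)).val = 0 from rfl, zero_smul]
    rw [e1, e2, add_zero]
  · intro i
    show (∑ k : Fin n₁, ((0:Z2)).val • r₁ k) +
        (∑ j, (((if j = i then (1:Z2) else 0) + ∑ k, (0:Z2) * T k j)).val • r₂ j) = r₂ i
    have e1 : (∑ k : Fin n₁, ((0:Z2)).val • r₁ k) = 0 :=
      Finset.sum_eq_zero fun k _ => by rw [show ((0:Z2)).val = 0 from rfl, zero_smul]
    have e2 : (∑ j, (((if j = i then (1:Z2) else 0) + ∑ k, (0:Z2) * T k j)).val • r₂ j)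
        = r₂ i := by
      have hin : ∀ j, ((if j = i then (1:Z2) else 0) + ∑ k, (0:Z2) * T k j)
          = if j = i then (1:Z2) else 0 := by intro j; simp
      rw [Finset.sum_congr rfl (fun j _ =>
        show (((if j = i then (1:Z2) else 0) + ∑ k, (0:Z2) * T k j)).val • r₂ j
            = if j = i then r₂ j else 0 by
          rw [hin j]
          split_ifs <;>
            simp [show ((1:Z2)).val = 1 from rfl, show ((0:Z2)).val = 0 from rfl])]
      simp
    rw [e1, e2, zero_add]

lemma purify_aux {n₁ n₂ : ℕ} {ι κ : Type}
    (gm : ((ι → Z2) × (κ → Z4)) →+ ((Fin n₁ → Z2) × (Fin n₂ → Z2)))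
    (hmf : ((Fin n₁ → Z2) × (Fin n₂ → Z2)) → ((ι → Z2) × (κ → Z4)))
    (hmadd : ∀ p q, hmf (p + q) = hmf p + hmf q) (hm0 : hmf 0 = 0)
    {G₁ G₂ : Set ((ι → Z2) × (κ → Z4))}
    (hfix : ∀ v ∈ G₁, hmf (gm v) = v ∧ v + v = 0)
    (hker : ∀ v ∈ G₂, gm v = 0)
    {w} (hw : w ∈ AddSubgroup.closure (G₁ ∪ G₂)) (hgw : gm w = 0) :
    w ∈ AddSubgroup.closure G₂ := by
  rw [AddSubgroup.closure_union, AddSubgroup.mem_sup] at hw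
  obtain ⟨x, hx, y, hy, hxy⟩ := hw
  have hky : gm y = 0 := by
    clear hxy hgw
    induction hy using AddSubgroup.closure_induction with
    | mem v hv => exact hker v hv
    | zero => exact map_zero gm
    | add a b _ _ iha ihb => rw [map_add, iha, ihb, add_zero]
    | neg a _ iha => rw [map_neg, iha, neg_zero]
  have hgx : gm x = 0 := by
    have h' : gm x + gm y = gm w := by rw [← map_add, hxy]
    rw [hky, add_zero] at h'
    rw [h']
    exact hgw
  have hfx : hmf (gm x) = x ∧ x + x = 0 := by
    clear hxy hgx
    induction hx using AddSubgroup.closure_induction with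
    | mem v hv => exact hfix v hv
    | zero => exact ⟨by rw [map_zero, hm0], by rw [add_zero]⟩
    | add a b _ _ iha ihb =>
      exact ⟨by rw [map_add, hmadd, iha.1, ihb.1],
        by rw [add_add_add_comm, iha.2, ihb.2, add_zero]⟩
    | neg a _ iha => rwa [neg_eq_of_add_eq_zero_left iha.2]
  have hx0 : x = 0 := by rw [← hfx.1, hgx, hm0]
  rw [← hxy, hx0, zero_add]
  exact hy


end StarAux

/-- Let `C` be generated by the rows of a generator matrix in the standard
block form
`[I T T_{b1} | 0 0 0], [0 I T_{b2} | 2T₂ 0 0], [0 0 0 | 2T₁ 2I 0], [0 0 S' | S R I]`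
(with `T₁, T₂, R` having entries in `{0,1}`), and let `C'` be the subcode generated by
the last two blocks of rows.  Then `Φ(C)` is linear iff `Φ(C')` is linear. -/
theorem extGray_linear_iff_subcode (κ₁ κ₂ a₃ q₁ g₃ δ : ℕ)
    (T : Fin κ₁ → Fin κ₂ → Z2) (Tb₁ : Fin κ₁ → Fin a₃ → Z2) (Tb₂ : Fin κ₂ → Fin a₃ → Z2)
    (T₂ : Fin κ₂ → Fin q₁ → Z4) (T₁ : Fin g₃ → Fin q₁ → Z4)
    (S' : Fin δ → Fin a₃ → Z2) (Sq : Fin δ → Fin q₁ → Z4) (Rm : Fin δ → Fin g₃ → Z4)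
    (hT₁ : ∀ i j, T₁ i j = 0 ∨ T₁ i j = 1)
    (hT₂ : ∀ i j, T₂ i j = 0 ∨ T₂ i j = 1)
    (hR : ∀ i j, Rm i j = 0 ∨ Rm i j = 1) :
    let B := Fin κ₁ ⊕ (Fin κ₂ ⊕ Fin a₃)
    let Q := Fin q₁ ⊕ (Fin g₃ ⊕ Fin δ)
    let row₁ : Fin κ₁ → (B → Z2) × (Q → Z4) := fun i =>
      (Sum.elim (fun j => if j = i then 1 else 0) (Sum.elim (T i) (Tb₁ i)), 0)
    let row₂ : Fin κ₂ → (B → Z2) × (Q → Z4) := fun i =>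
      (Sum.elim (fun _ => 0) (Sum.elim (fun j => if j = i then 1 else 0) (Tb₂ i)),
        Sum.elim (fun j => 2 * T₂ i j) (fun _ => 0))
    let row₃ : Fin g₃ → (B → Z2) × (Q → Z4) := fun i =>
      (0, Sum.elim (fun j => 2 * T₁ i j)
        (Sum.elim (fun j => if j = i then 2 else 0) (fun _ => 0)))
    let row₄ : Fin δ → (B → Z2) × (Q → Z4) := fun i =>
      (Sum.elim (fun _ => 0) (Sum.elim (fun _ => 0) (S' i)),
        Sum.elim (Sq i) (Sum.elim (Rm i) (fun j => if j = i then 1 else 0)))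
    let C : AddSubgroup ((B → Z2) × (Q → Z4)) := AddSubgroup.closure
      (Set.range row₁ ∪ Set.range row₂ ∪ Set.range row₃ ∪ Set.range row₄)
    let C' : AddSubgroup ((B → Z2) × (Q → Z4)) := AddSubgroup.closure
      (Set.range row₃ ∪ Set.range row₄)
    ((∃ S : Submodule Z2 ((B → Z2) × ((Q ⊕ Q) → Z2)),
        (S : Set _) = extGray (ι := B) (κ := Q) '' (C : Set _)) ↔
      ∃ S : Submodule Z2 ((B → Z2) × ((Q ⊕ Q) → Z2)),
        (S : Set _) = extGray (ι := B) (κ := Q) '' (C' : Set _)) := by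
  intro B Q row₁ row₂ row₃ row₄ C C'
  classical
  -- order-two facts about the first three blocks of rows
  have hz4 : ∀ a : Z4, 2 * (2 * a) = 0 := by decide
  have ho1 : ∀ i, 2 * (row₁ i).2 = 0 := fun i => mul_zero 2
  have ho2 : ∀ i, 2 * (row₂ i).2 = 0 := by
    intro i; funext j
    cases j with
    | inl j => exact hz4 (T₂ i j)
    | inr j => exact mul_zero 2
  have ho3 : ∀ i, 2 * (row₃ i).2 = 0 := by
    intro i; funext j
    cases j with
    | inl j => exact hz4 (T₁ i j)
    | inr j =>
      cases j with
      | inl j =>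
        show 2 * (if j = i then (2 : Z4) else 0) = 0
        split_ifs <;> decide
      | inr j => exact mul_zero 2
  -- membership of generators
  have h4C : ∀ i, row₄ i ∈ C := fun i => AddSubgroup.subset_closure (Or.inr ⟨i, rfl⟩)
  have h4C' : ∀ i, row₄ i ∈ C' := fun i => AddSubgroup.subset_closure (Or.inr ⟨i, rfl⟩)
  have hsub : C' ≤ C := AddSubgroup.closure_mono (by
    rintro x (hx | hx)
    · exact Or.inl (Or.inr hx)
    · exact Or.inr hx)
  -- the purification step: an element of C with zero binary part lies in C'
  have purify : ∀ w, w ∈ C → w.1 = 0 → w ∈ C' := by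
    intro w hwC hw1
    obtain ⟨hmf, hmadd, hm0, key1, key2⟩ := StarAux.retract_fix row₁ row₂ T
      (fun i => StarAux.add_self_of _ (ho1 i)) (fun j => StarAux.add_self_of _ (ho2 j))
    let gmap : ((B → Z2) × (Q → Z4)) →+ ((Fin κ₁ → Z2) × (Fin κ₂ → Z2)) :=
      { toFun := fun v => (fun i => v.1 (Sum.inl i), fun i => v.1 (Sum.inr (Sum.inl i))),
        map_zero' := rfl, map_add' := fun _ _ => rfl }
    have hw2 : w ∈ AddSubgroup.closure
        ((Set.range row₁ ∪ Set.range row₂) ∪ (Set.range row₃ ∪ Set.range row₄)) := by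
      have hunion : (Set.range row₁ ∪ Set.range row₂ ∪ Set.range row₃ ∪ Set.range row₄)
          = (Set.range row₁ ∪ Set.range row₂) ∪ (Set.range row₃ ∪ Set.range row₄) := by
        rw [Set.union_assoc (Set.range row₁ ∪ Set.range row₂)]
      rw [← hunion]
      exact hwC
    have hgw : gmap w = 0 := by
      have h1 : gmap w = (fun i => w.1 (Sum.inl i), fun i => w.1 (Sum.inr (Sum.inl i))) := rfl
      rw [h1, hw1]
      rfl
    refine StarAux.purify_aux gmap hmf hmadd hm0 ?_ ?_ hw2 hgw
    · rintro v (⟨i, rfl⟩ | ⟨i, rfl⟩)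
      · have hg : gmap (row₁ i) = (fun k => if k = i then (1:Z2) else 0, fun j => T i j) := rfl
        exact ⟨by rw [hg]; exact key1 i, StarAux.add_self_of _ (ho1 i)⟩
      · have hg : gmap (row₂ i)
            = (fun _ => (0:Z2), fun j => if j = i then (1:Z2) else 0) := rfl
        exact ⟨by rw [hg]; exact key2 i, StarAux.add_self_of _ (ho2 i)⟩
    · rintro v (⟨i, rfl⟩ | ⟨i, rfl⟩) <;> rfl
  -- the key property: the star corrections of the order-four rows lie in C'
  have hP_of_C : (∃ S : Submodule Z2 ((B → Z2) × ((Q ⊕ Q) → Z2)),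
      (S : Set _) = extGray (ι := B) (κ := Q) '' (C : Set _)) →
      ∀ i j, StarAux.starc (row₄ i) (row₄ j) ∈ C' := by
    intro hlin i j
    exact purify _ ((StarAux.linear_iff_starc C).mp hlin _ (h4C i) _ (h4C j)) rfl
  have hP_of_C' : (∃ S : Submodule Z2 ((B → Z2) × ((Q ⊕ Q) → Z2)),
      (S : Set _) = extGray (ι := B) (κ := Q) '' (C' : Set _)) →
      ∀ i j, StarAux.starc (row₄ i) (row₄ j) ∈ C' := by
    intro hlin i j
    exact (StarAux.linear_iff_starc C').mp hlin _ (h4C' i) _ (h4C' j)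
  have hC'_of_P : (∀ i j, StarAux.starc (row₄ i) (row₄ j) ∈ C') →
      (∃ S : Submodule Z2 ((B → Z2) × ((Q ⊕ Q) → Z2)),
      (S : Set _) = extGray (ι := B) (κ := Q) '' (C' : Set _)) := by
    intro hP
    refine (StarAux.linear_iff_starc C').mpr ?_
    refine StarAux.starc_mem_closure ?_
    rintro g (⟨i, rfl⟩ | ⟨i, rfl⟩) g' hg'
    · rw [StarAux.starc_eq_zero_left _ (ho3 i)]; exact AddSubgroup.zero_mem _
    · rcases hg' with ⟨j, rfl⟩ | ⟨j, rfl⟩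
      · rw [StarAux.starc_eq_zero_right _ (ho3 j)]; exact AddSubgroup.zero_mem _
      · exact hP i j
  have hC_of_P : (∀ i j, StarAux.starc (row₄ i) (row₄ j) ∈ C') →
      (∃ S : Submodule Z2 ((B → Z2) × ((Q ⊕ Q) → Z2)),
      (S : Set _) = extGray (ι := B) (κ := Q) '' (C : Set _)) := by
    intro hP
    refine (StarAux.linear_iff_starc C).mpr ?_
    refine StarAux.starc_mem_closure ?_
    rintro g (((⟨i, rfl⟩ | ⟨i, rfl⟩) | ⟨i, rfl⟩) | ⟨i, rfl⟩) g' hg'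
    · rw [StarAux.starc_eq_zero_left _ (ho1 i)]; exact AddSubgroup.zero_mem _
    · rw [StarAux.starc_eq_zero_left _ (ho2 i)]; exact AddSubgroup.zero_mem _
    · rw [StarAux.starc_eq_zero_left _ (ho3 i)]; exact AddSubgroup.zero_mem _
    · rcases hg' with ((⟨j, rfl⟩ | ⟨j, rfl⟩) | ⟨j, rfl⟩) | ⟨j, rfl⟩
      · rw [StarAux.starc_eq_zero_right _ (ho1 j)]; exact AddSubgroup.zero_mem _
      · rw [StarAux.starc_eq_zero_right _ (ho2 j)]; exact AddSubgroup.zero_mem _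
      · rw [StarAux.starc_eq_zero_right _ (ho3 j)]; exact AddSubgroup.zero_mem _
      · exact hsub (hP i j)
  exact ⟨fun h => hC'_of_P (hP_of_C h), fun h => hC_of_P (hP_of_C' h)⟩
end
end

section
/- Let C = ⟨(b|0), (ℓ | fh + 2f)⟩ be a Z2Z4-additive cyclic code with β odd and fgh = x^β − 1 in Z4[x]. Set ℓ' = ℓ − μ̃ ℓ g̃ (mod x^α − 1), where λh + μg = 1 in Z4[x]. Then C is also generated as a Z4[x]-module by the three elements (b|0), (ℓg̃ | 2fg), and (ℓ' | fh). -/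
open Polynomial

noncomputable section

lemma pmk_smul2 {n : ℕ} (p : Polynomial Z4) (q : Polynomial Z2) :
    p • (pmk n q : QR Z2 n) = pmk n (p.map ρ * q) := rfl

lemma pmk_smul4 {n : ℕ} (p q : Polynomial Z4) :
    p • (pmk n q : QR Z4 n) = pmk n (p * q) := rfl

lemma pmk_eq_of {R : Type} [CommRing R] {n : ℕ} {a c : Polynomial R} (w : Polynomial R)
    (hw : a - c = (Polynomial.X ^ n - 1) * w) : pmk n a = pmk n c :=
  Ideal.Quotient.eq.mpr (Ideal.mem_span_singleton.mpr ⟨w, hw⟩)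

lemma pmk_add {R : Type} [CommRing R] {n : ℕ} (a b : Polynomial R) :
    (pmk n a) + (pmk n b) = pmk n (a + b) := (map_add _ _ _).symm

/-- For `C = ⟨(b|0), (ℓ | fh+2f)⟩` with `β` odd and `fgh = x^β-1`, setting
`ℓ' = ℓ - μ̃ℓg̃` (where `λh + μg = 1`), the code `C` is also generated by the three
elements `(b|0)`, `(ℓg̃ | 2fg)` and `(ℓ' | fh)`. -/
theorem three_generators (α β : ℕ) (hβ : Odd β)
    (b ℓ : Polynomial Z2) (f g h : Polynomial Z4)
    (hb : b ∣ Polynomial.X ^ α - 1)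
    (hfgh : f * g * h = Polynomial.X ^ β - 1)
    (lam mu : Polynomial Z4) (hlm : lam * h + mu * g = 1) :
    Submodule.span (Polynomial Z4)
        {((pmk α b : QR Z2 α), (0 : QR Z4 β)), (pmk α ℓ, pmk β (f * h + 2 * f))} =
      Submodule.span (Polynomial Z4)
        {((pmk α b : QR Z2 α), (0 : QR Z4 β)),
         (pmk α (ℓ * g.map ρ), pmk β (2 * f * g)),
         (pmk α (ℓ - mu.map ρ * ℓ * g.map ρ), pmk β (f * h))} := by
  have h2 : (2 : Polynomial Z2) = 0 := CharTwo.two_eq_zero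
  have h4 : (4 : Polynomial Z4) = 0 := by
    simpa using CharP.cast_eq_zero (Polynomial Z4) 4
  have key1 : ((pmk α (ℓ * g.map ρ) : QR Z2 α), (pmk β (2*f*g) : QR Z4 β))
      = g • ((pmk α ℓ : QR Z2 α), (pmk β (f*h+2*f) : QR Z4 β)) := by
    rw [Prod.smul_mk, pmk_smul2, pmk_smul4, Prod.mk.injEq]
    refine ⟨congrArg _ (mul_comm _ _), pmk_eq_of (-1) ?_⟩
    rw [← hfgh]; ring
  have hm1 : ((1 + 2*lam)).map ρ = 1 := by
    simp [Polynomial.map_add, Polynomial.map_mul, Polynomial.map_one, Polynomial.map_ofNat, h2]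
  have hm2 : (((1 + 2*lam))*mu).map ρ = mu.map ρ := by
    rw [Polynomial.map_mul, hm1, one_mul]
  have hm3 : ((1 - 2*lam)*(1 - mu*g)).map ρ = 1 - mu.map ρ * g.map ρ := by
    simp only [Polynomial.map_mul, Polynomial.map_sub, Polynomial.map_one, Polynomial.map_ofNat,
      h2, zero_mul, sub_zero, one_mul]
  have key2 : ((pmk α (ℓ - mu.map ρ * ℓ * g.map ρ) : QR Z2 α), (pmk β (f*h) : QR Z4 β))
      = ((1 - 2*lam)*(1 - mu*g)) • ((pmk α ℓ : QR Z2 α), (pmk β (f*h+2*f) : QR Z4 β)) := by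
    rw [Prod.smul_mk, pmk_smul2, pmk_smul4, Prod.mk.injEq, hm3]
    refine ⟨congrArg _ (by ring), pmk_eq_of ((1 - 2*lam)*mu) ?_⟩
    rw [← hfgh]
    linear_combination 2*f*hlm + (lam*f - lam*mu*g*f)*h4
  have key3 : ((pmk α ℓ : QR Z2 α), (pmk β (f*h+2*f) : QR Z4 β))
      = (1 + 2*lam) • ((pmk α (ℓ - mu.map ρ * ℓ * g.map ρ) : QR Z2 α), (pmk β (f*h) : QR Z4 β))
        + ((1 + 2*lam)*mu) • ((pmk α (ℓ * g.map ρ) : QR Z2 α), (pmk β (2*f*g) : QR Z4 β)) := by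
    rw [Prod.smul_mk, Prod.smul_mk, pmk_smul2, pmk_smul2, pmk_smul4, pmk_smul4,
      Prod.mk_add_mk, pmk_add, pmk_add, Prod.mk.injEq, hm1, hm2]
    refine ⟨congrArg _ (by ring), congrArg _ ?_⟩
    linear_combination (-(2*f))*hlm + (-(lam*mu*f*g))*h4
  refine le_antisymm (Submodule.span_le.mpr ?_) (Submodule.span_le.mpr ?_)
  · rintro x hx
    simp only [Set.mem_insert_iff, Set.mem_singleton_iff] at hx
    rcases hx with rfl | rfl
    · exact Submodule.subset_span (by simp)
    · rw [key3]
      exact Submodule.add_mem _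
        (Submodule.smul_mem _ _ (Submodule.subset_span (by simp)))
        (Submodule.smul_mem _ _ (Submodule.subset_span (by simp)))
  · rintro x hx
    simp only [Set.mem_insert_iff, Set.mem_singleton_iff] at hx
    rcases hx with rfl | rfl | rfl
    · exact Submodule.subset_span (by simp)
    · rw [key1]
      exact Submodule.smul_mem _ _ (Submodule.subset_span (by simp))
    · rw [key2]
      exact Submodule.smul_mem _ _ (Submodule.subset_span (by simp))
end
end

section
/- Every binary Z2-double cyclic code C of length r+s is generated, as a Z2[x]-submodule of Z2[x]/(x^r−1) × Z2[x]/(x^s−1), by two elements (b | 0) and (ℓ | a), where a | x^s − 1, b | x^r − 1, and deg ℓ < deg b. -/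
open Polynomial

noncomputable section

lemma z2_monic (p : Polynomial Z2) (hp : p ≠ 0) : p.Monic := by
  have h := Polynomial.leadingCoeff_ne_zero.mpr hp
  unfold Polynomial.Monic
  revert h
  generalize p.leadingCoeff = c
  revert c; decide

lemma cyclic_principal (n : ℕ) (hn : 0 < n) (M : Submodule (Polynomial Z2) (QR Z2 n)) :
    ∃ g : Polynomial Z2, g.Monic ∧ g ∣ Polynomial.X ^ n - 1 ∧
      M = Submodule.span (Polynomial Z2) {pmk n g} := by
  set I : Ideal (Polynomial Z2) := Ideal.span {(Polynomial.X : Polynomial Z2) ^ n - 1} with hI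
  have hsurj : Function.Surjective I.mkQ := Submodule.mkQ_surjective I
  set J : Ideal (Polynomial Z2) := M.comap I.mkQ with hJ
  obtain ⟨g, hg⟩ := (IsPrincipalIdealRing.principal J).principal
  have hXn : ((Polynomial.X : Polynomial Z2) ^ n - 1) ∈ J := by
    show I.mkQ _ ∈ M
    have : I.mkQ ((Polynomial.X : Polynomial Z2) ^ n - 1) = 0 := by
      rw [Submodule.mkQ_apply, Submodule.Quotient.mk_eq_zero]
      exact Ideal.subset_span rfl
    rw [this]; exact M.zero_mem
  have hdvd : g ∣ Polynomial.X ^ n - 1 := by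
    rw [hg] at hXn
    exact Ideal.mem_span_singleton.mp hXn
  have hne : (Polynomial.X : Polynomial Z2) ^ n - 1 ≠ 0 := by
    have := Polynomial.X_pow_sub_C_ne_zero hn (1 : Z2)
    simpa using this
  have hg0 : g ≠ 0 := by rintro rfl; exact hne (zero_dvd_iff.mp hdvd)
  refine ⟨g, z2_monic g hg0, hdvd, ?_⟩
  have hM : M = Submodule.map I.mkQ J := (Submodule.map_comap_eq_of_surjective hsurj M).symm
  rw [hM, hg, Submodule.map_span, Set.image_singleton]
  rfl

/-- Every binary `Z2`-double cyclic code of length `r+s`, i.e. every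
`Z2[x]`-submodule of `Z2[x]/(x^r-1) × Z2[x]/(x^s-1)`, is generated by two elements
`(b | 0)` and `(ℓ | a)` with `a ∣ x^s - 1`, `b ∣ x^r - 1` and `deg ℓ < deg b`. -/
theorem double_cyclic_generators (r s : ℕ) (hr : 0 < r) (hs : 0 < s)
    (S : Submodule (Polynomial Z2) (QR Z2 r × QR Z2 s)) :
    ∃ b ℓ a : Polynomial Z2,
      b ∣ Polynomial.X ^ r - 1 ∧ a ∣ Polynomial.X ^ s - 1 ∧ ℓ.degree < b.degree ∧
        S = Submodule.span (Polynomial Z2)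
          {((pmk r b : QR Z2 r), (0 : QR Z2 s)), (pmk r ℓ, pmk s a)} := by
  classical
  set π := LinearMap.snd (Polynomial Z2) (QR Z2 r) (QR Z2 s) with hπ
  obtain ⟨a, ha_mon, ha_dvd, ha_span⟩ := cyclic_principal s hs (S.map π)
  set ι := LinearMap.inl (Polynomial Z2) (QR Z2 r) (QR Z2 s) with hι
  obtain ⟨b, hb_mon, hb_dvd, hb_span⟩ := cyclic_principal r hr (S.comap ι)
  have hbS : ((pmk r b, 0) : QR Z2 r × QR Z2 s) ∈ S := by
    have : pmk r b ∈ S.comap ι := by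
      rw [hb_span]; exact Submodule.subset_span rfl
    simpa [hι] using this
  have haM : pmk s a ∈ S.map π := by rw [ha_span]; exact Submodule.subset_span rfl
  obtain ⟨v, hvS, hv2⟩ := haM
  obtain ⟨ℓ₁, hℓ₁⟩ := Ideal.Quotient.mk_surjective (I := Ideal.span
    {(Polynomial.X : Polynomial Z2) ^ r - 1}) v.1
  set ℓ := ℓ₁ %ₘ b with hℓ
  have hdeg : ℓ.degree < b.degree := Polynomial.degree_modByMonic_lt ℓ₁ hb_mon
  have hsmul : ∀ (p q : Polynomial Z2), (p • pmk r q : QR Z2 r) = pmk r (p * q) := by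
    intro p q; rfl
  have hℓmk : (pmk r ℓ : QR Z2 r) = v.1 - (ℓ₁ /ₘ b) • pmk r b := by
    rw [hsmul, ← hℓ₁]
    show Ideal.Quotient.mk _ ℓ = Ideal.Quotient.mk _ ℓ₁ - Ideal.Quotient.mk _ _
    rw [← map_sub]
    congr 1
    rw [hℓ, Polynomial.modByMonic_eq_sub_mul_div ℓ₁ b, mul_comm]
  have hℓS : ((pmk r ℓ, pmk s a) : QR Z2 r × QR Z2 s) ∈ S := by
    have h2 : ((pmk r ℓ, pmk s a) : QR Z2 r × QR Z2 s)
        = v - (ℓ₁ /ₘ b) • (pmk r b, 0) := by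
      ext
      · simp [hℓmk]
      · simp [← hv2, hπ]
    rw [h2]
    exact S.sub_mem hvS (S.smul_mem _ hbS)
  refine ⟨b, ℓ, a, hb_dvd, ha_dvd, hdeg, le_antisymm ?_ ?_⟩
  · intro z hz
    have hz2 : z.2 ∈ S.map π := ⟨z, hz, rfl⟩
    rw [ha_span, Submodule.mem_span_singleton] at hz2
    obtain ⟨p, hp⟩ := hz2
    set w : QR Z2 r × QR Z2 s := z - p • (pmk r ℓ, pmk s a) with hw
    have hwS : w ∈ S := S.sub_mem hz (S.smul_mem _ hℓS)
    have hw2 : w.2 = 0 := by simp [hw, ← hp]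
    have hw1 : w.1 ∈ S.comap ι := by
      show ι w.1 ∈ S
      have : ι w.1 = w := by
        ext
        · rfl
        · simp [hι, hw2]
      rw [this]; exact hwS
    rw [hb_span, Submodule.mem_span_singleton] at hw1
    obtain ⟨q, hq⟩ := hw1
    have hz_eq : z = q • ((pmk r b, 0) : QR Z2 r × QR Z2 s) + p • (pmk r ℓ, pmk s a) := by
      have : z = w + p • (pmk r ℓ, pmk s a) := by simp [hw]
      rw [this]
      congr 1
      ext
      · simp [← hq]
      · simp [hw2]
    rw [hz_eq]
    exact Submodule.add_mem _
      (Submodule.smul_mem _ _ (Submodule.subset_span (Set.mem_insert _ _)))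
      (Submodule.smul_mem _ _ (Submodule.subset_span (Set.mem_insert_iff.mpr (Or.inr rfl))))
  · rw [Submodule.span_le]
    rintro z (rfl | rfl)
    · exact hbS
    · exact hℓS
end
end
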